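/- arXiv:1608.06014 — 5 statements merged into one kernel-verified Lean document; each statement's English description precedes it below -/
import Mathlib

section
/- If z_1, z_2 ∈ ℝ^n satisfy ‖z_1‖ = ‖z_2‖ and proj_𝒩(z_1) = proj_𝒩(z_2), then μ̄(z_1) = μ̄(z_2). -/
open RealInnerProductSpace

/-- If `‖z_1‖ = ‖z_2‖` and `proj_𝒩 z_1 = proj_𝒩 z_2`, then `μ̄(z_1) = μ̄(z_2)`,
where `μ̄(b) = sup {⟪z, b⟫ : z ∈ ⋂_k D_k}`. -/
theorem stmt_11 (n m : ℕ) (nv : Fin m → EuclideanSpace ℝ (Fin n))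
    (hnv : ∀ k, ‖nv k‖ = 1) (ψ : Fin m → ℝ)
    (z₁ z₂ : EuclideanSpace ℝ (Fin n))
    (hnorm : ‖z₁‖ = ‖z₂‖)
    (hproj : Submodule.orthogonalProjectionOnto (Submodule.span ℝ (Set.range nv)) z₁ =
      Submodule.orthogonalProjectionOnto (Submodule.span ℝ (Set.range nv)) z₂) :
    sSup ((fun z => ⟪z, z₁⟫) ''
        ⋂ k, {z : EuclideanSpace ℝ (Fin n) | ‖z‖ ≤ 1 ∧ ⟪nv k, z⟫ + ψ k ≤ 0}) =
      sSup ((fun z => ⟪z, z₂⟫) ''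
        ⋂ k, {z : EuclideanSpace ℝ (Fin n) | ‖z‖ ≤ 1 ∧ ⟪nv k, z⟫ + ψ k ≤ 0}) := by
  set N := Submodule.span ℝ (Set.range nv) with hN
  have hmem : z₁ - z₂ ∈ Nᗮ := by
    rw [← Submodule.orthogonalProjectionOnto_eq_zero_iff]
    rw [map_sub, hproj, sub_self]
  set T := Submodule.reflection (ℝ ∙ (z₁ - z₂))ᗮ with hT
  have hT1 : T z₁ = z₂ := Submodule.reflection_sub hnorm
  have hT2 : T z₂ = z₁ := by
    have := congrArg T hT1
    rw [Submodule.reflection_reflection] at this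
    exact this.symm
  have hfix : ∀ k, T (nv k) = nv k := by
    intro k
    apply Submodule.reflection_mem_subspace_eq_self
    rw [Submodule.mem_orthogonal_singleton_iff_inner_right, real_inner_comm]
    exact hmem (nv k) (Submodule.subset_span (Set.mem_range_self k))
  set D : Set (EuclideanSpace ℝ (Fin n)) :=
    ⋂ k, {z : EuclideanSpace ℝ (Fin n) | ‖z‖ ≤ 1 ∧ ⟪nv k, z⟫ + ψ k ≤ 0} with hD
  have hmap : ∀ z ∈ D, T z ∈ D := by
    intro z hz
    simp only [hD, Set.mem_iInter, Set.mem_setOf_eq] at hz ⊢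
    intro k
    refine ⟨by rw [T.norm_map]; exact (hz k).1, ?_⟩
    have : ⟪nv k, T z⟫ = ⟪nv k, z⟫ := by
      conv_lhs => rw [← hfix k]
      exact T.inner_map_map (nv k) z
    rw [this]; exact (hz k).2
  have hsets : (fun z => ⟪z, z₁⟫) '' D = (fun z => ⟪z, z₂⟫) '' D := by
    ext x
    constructor
    · rintro ⟨z, hz, rfl⟩
      refine ⟨T z, hmap z hz, ?_⟩
      simp only
      rw [← hT1]
      exact T.inner_map_map z z₁
    · rintro ⟨z, hz, rfl⟩
      refine ⟨T z, hmap z hz, ?_⟩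
      simp only
      rw [← hT2]
      exact T.inner_map_map z z₂
  rw [hsets]
end

section
/- There exists a function g : 𝒩 → ℝ such that for every b ∈ ℝ^n with ‖b‖ = 1, μ̄(b) = g(proj_𝒩(b)); that is, on the unit sphere, μ̄ is determined by the orthogonal projection onto 𝒩. -/
open RealInnerProductSpace

lemma aux_subset {n m : ℕ} (nv : Fin m → EuclideanSpace ℝ (Fin n)) (ψ : Fin m → ℝ)
    (b1 b2 : EuclideanSpace ℝ (Fin n)) (hnorm : ‖b1‖ = ‖b2‖)
    (horth : ∀ k, ⟪nv k, b1 - b2⟫ = 0) :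
    ((fun z => ⟪z, b1⟫) '' ⋂ k, {z : EuclideanSpace ℝ (Fin n) | ‖z‖ ≤ 1 ∧ ⟪nv k, z⟫ + ψ k ≤ 0}) ⊆
    ((fun z => ⟪z, b2⟫) '' ⋂ k, {z : EuclideanSpace ℝ (Fin n) | ‖z‖ ≤ 1 ∧ ⟪nv k, z⟫ + ψ k ≤ 0}) := by
  set K : Submodule ℝ (EuclideanSpace ℝ (Fin n)) := (ℝ ∙ (b1 - b2))ᗮ with hK
  set T := K.reflection with hT
  have h1 : T (b1 + b2) = b1 + b2 := by
    apply Submodule.reflection_mem_subspace_eq_self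
    rw [hK, Submodule.mem_orthogonal_singleton_iff_inner_left]
    have e1 : ⟪b1, b1⟫ = ‖b1‖ ^ 2 := real_inner_self_eq_norm_sq b1
    have e2 : ⟪b2, b2⟫ = ‖b2‖ ^ 2 := real_inner_self_eq_norm_sq b2
    have e3 : ⟪b2, b1⟫ = ⟪b1, b2⟫ := real_inner_comm b1 b2
    simp only [inner_add_left, inner_sub_right, e1, e2, e3, hnorm]
    ring
  have h2 : T (b1 - b2) = -(b1 - b2) := by
    apply Submodule.reflection_mem_subspace_orthogonalComplement_eq_neg
    exact Submodule.le_orthogonal_orthogonal _ (Submodule.mem_span_singleton_self _)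
  have hTb : T b1 = b2 := by
    have hb1 : b1 = (2⁻¹ : ℝ) • ((b1 + b2) + (b1 - b2)) := by module
    conv_lhs => rw [hb1]
    rw [map_smul, map_add, h1, h2]; module
  have hTn : ∀ k, T (nv k) = nv k := by
    intro k
    apply Submodule.reflection_mem_subspace_eq_self
    rw [hK, Submodule.mem_orthogonal_singleton_iff_inner_left]
    exact horth k
  rintro _ ⟨z, hz, rfl⟩
  simp only [Set.mem_iInter, Set.mem_setOf_eq] at hz
  refine ⟨T z, ?_, ?_⟩
  · simp only [Set.mem_iInter, Set.mem_setOf_eq]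
    intro k
    refine ⟨?_, ?_⟩
    · rw [T.norm_map]; exact (hz k).1
    · have : ⟪nv k, T z⟫ = ⟪nv k, z⟫ := by
        conv_lhs => rw [← hTn k]
        exact T.inner_map_map _ _
      rw [this]; exact (hz k).2
  · show ⟪T z, b2⟫ = ⟪z, b1⟫
    rw [← hTb]
    exact T.inner_map_map _ _

/-- There is a function `g : 𝒩 → ℝ` such that for every unit-norm `b`,
`μ̄(b) = g(proj_𝒩 b)`. -/
theorem stmt_13 (n m : ℕ) (nv : Fin m → EuclideanSpace ℝ (Fin n))
    (hnv : ∀ k, ‖nv k‖ = 1) (ψ : Fin m → ℝ) :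
    ∃ g : (Submodule.span ℝ (Set.range nv)) → ℝ,
      ∀ b : EuclideanSpace ℝ (Fin n), ‖b‖ = 1 →
        sSup ((fun z => ⟪z, b⟫) ''
            ⋂ k, {z : EuclideanSpace ℝ (Fin n) | ‖z‖ ≤ 1 ∧ ⟪nv k, z⟫ + ψ k ≤ 0}) =
          g (Submodule.orthogonalProjection (Submodule.span ℝ (Set.range nv)) b) := by
  classical
  set N := Submodule.span ℝ (Set.range nv) with hN
  refine ⟨fun p =>
    if h : ∃ b : EuclideanSpace ℝ (Fin n), ‖b‖ = 1 ∧ Submodule.orthogonalProjection N b = p then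
      sSup ((fun z => ⟪z, h.choose⟫) ''
        ⋂ k, {z : EuclideanSpace ℝ (Fin n) | ‖z‖ ≤ 1 ∧ ⟪nv k, z⟫ + ψ k ≤ 0})
    else 0, ?_⟩
  intro b hb
  have hex : ∃ b' : EuclideanSpace ℝ (Fin n), ‖b'‖ = 1 ∧
      Submodule.orthogonalProjection N b' = Submodule.orthogonalProjection N b := ⟨b, hb, rfl⟩
  beta_reduce
  rw [dif_pos hex]
  obtain ⟨hc1, hc2⟩ := hex.choose_spec
  set c := hex.choose with hc
  have hmem : b - c ∈ Nᗮ := by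
    rw [← Submodule.orthogonalProjectionOnto_eq_zero_iff]
    rw [map_sub, hc2, sub_self]
  have horth : ∀ k, ⟪nv k, b - c⟫ = 0 := by
    intro k
    exact (Submodule.mem_orthogonal N (b - c)).mp hmem (nv k)
      (Submodule.subset_span ⟨k, rfl⟩)
  have horth' : ∀ k, ⟪nv k, c - b⟫ = 0 := by
    intro k
    rw [show c - b = -(b - c) from (neg_sub b c).symm, inner_neg_right, horth k, neg_zero]
  congr 1
  apply Set.Subset.antisymm
  · exact aux_subset nv ψ b c (hb.trans hc1.symm) horth
  · exact aux_subset nv ψ c b (hc1.trans hb.symm) horth'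
end

section
/- Let v_1,…,v_m be vectors whose span is the subspace 𝒩 = span{n_1,…,n_m}. Then there exists a function h : ℝ^m → ℝ such that for every b ∈ ℝ^n with ‖b‖ = 1, μ̄(b) = h(⟪v_1, b⟫, ⟪v_2, b⟫, …, ⟪v_m, b⟫). -/
open RealInnerProductSpace

/-- If `span{v_1,…,v_m} = 𝒩`, then there is `h : ℝ^m → ℝ` such that for every
unit-norm `b`, `μ̄(b) = h(⟪v_1, b⟫, …, ⟪v_m, b⟫)`. -/
theorem stmt_14 (n m : ℕ) (nv : Fin m → EuclideanSpace ℝ (Fin n))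
    (hnv : ∀ k, ‖nv k‖ = 1) (ψ : Fin m → ℝ)
    (v : Fin m → EuclideanSpace ℝ (Fin n))
    (hspan : Submodule.span ℝ (Set.range v) = Submodule.span ℝ (Set.range nv)) :
    ∃ h : (Fin m → ℝ) → ℝ,
      ∀ b : EuclideanSpace ℝ (Fin n), ‖b‖ = 1 →
        sSup ((fun z => ⟪z, b⟫) ''
            ⋂ k, {z : EuclideanSpace ℝ (Fin n) | ‖z‖ ≤ 1 ∧ ⟪nv k, z⟫ + ψ k ≤ 0}) =
          h (fun j => ⟪v j, b⟫) := by
  classical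
  set S : Set (EuclideanSpace ℝ (Fin n)) :=
    ⋂ k, {z : EuclideanSpace ℝ (Fin n) | ‖z‖ ≤ 1 ∧ ⟪nv k, z⟫ + ψ k ≤ 0} with hSdef
  have incl : ∀ b b' : EuclideanSpace ℝ (Fin n), ‖b‖ = 1 → ‖b'‖ = 1 →
      (∀ j, ⟪v j, b⟫ = ⟪v j, b'⟫) →
      ((fun z => ⟪z, b⟫) '' S) ⊆ ((fun z => ⟪z, b'⟫) '' S) := by
    intro b b' hb hb' hj
    -- b - b' is orthogonal to span of nv
    have horth : ∀ w ∈ Submodule.span ℝ (Set.range nv), ⟪w, b - b'⟫ = 0 := by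
      rw [← hspan]
      intro w hw
      induction hw using Submodule.span_induction with
      | mem x hx =>
          obtain ⟨j, rfl⟩ := hx
          rw [inner_sub_right, hj j, sub_self]
      | zero => simp
      | add x y _ _ hx hy => rw [inner_add_left, hx, hy, add_zero]
      | smul c x _ hx => rw [inner_smul_left, hx, mul_zero]
    have hKnv : ∀ k, nv k ∈ (ℝ ∙ (b - b'))ᗮ := by
      intro k
      rw [Submodule.mem_orthogonal]
      intro u hu
      obtain ⟨c, rfl⟩ := Submodule.mem_span_singleton.mp hu
      rw [real_inner_smul_left, real_inner_comm,
        horth _ (Submodule.subset_span ⟨k, rfl⟩), mul_zero]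
    set f := Submodule.reflection (ℝ ∙ (b - b'))ᗮ with hf
    have hfb : f b = b' := Submodule.reflection_sub (by rw [hb, hb'])
    have hfnv : ∀ k, f (nv k) = nv k := fun k =>
      Submodule.reflection_mem_subspace_eq_self (hKnv k)
    have hfS : ∀ z ∈ S, f z ∈ S := by
      intro z hz
      rw [hSdef, Set.mem_iInter] at hz ⊢
      intro k
      obtain ⟨h1, h2⟩ := hz k
      refine ⟨by rw [f.norm_map]; exact h1, ?_⟩
      have : ⟪nv k, f z⟫ = ⟪nv k, z⟫ := by
        conv_lhs => rw [← hfnv k]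
        exact f.inner_map_map (nv k) z
      rw [this]; exact h2
    rintro x ⟨z, hz, rfl⟩
    refine ⟨f z, hfS z hz, ?_⟩
    show ⟪f z, b'⟫ = ⟪z, b⟫
    rw [← hfb]
    exact f.inner_map_map z b
  have key : ∀ b b' : EuclideanSpace ℝ (Fin n), ‖b‖ = 1 → ‖b'‖ = 1 →
      (∀ j, ⟪v j, b⟫ = ⟪v j, b'⟫) →
      ((fun z => ⟪z, b⟫) '' S) = ((fun z => ⟪z, b'⟫) '' S) :=
    fun b b' hb hb' hj => Set.Subset.antisymm (incl b b' hb hb' hj)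
      (incl b' b hb' hb fun j => (hj j).symm)
  set P : (Fin m → ℝ) → Prop := fun c => ∃ b : EuclideanSpace ℝ (Fin n),
    ‖b‖ = 1 ∧ ∀ j, ⟪v j, b⟫ = c j with hP
  refine ⟨fun c => if hc : P c then sSup ((fun z => ⟪z, hc.choose⟫) '' S) else 0, ?_⟩
  intro b hb
  have hc : P (fun j => ⟪v j, b⟫) := ⟨b, hb, fun j => rfl⟩
  simp only [dif_pos hc]
  exact congrArg sSup (key b hc.choose hb hc.choose_spec.1
    fun j => (hc.choose_spec.2 j).symm)
end

section
/- Let v_1,…,v_m be an orthonormal basis of the subspace 𝒩 = span{n_1,…,n_m} (assume dim 𝒩 = m), let A be the m×m matrix with entries A_{kj} = ⟪n_k, v_j⟫, and for b ∈ ℝ^n with ‖b‖ = 1 let t_b = (⟪v_1, b⟫,…,⟪v_m, b⟫) ∈ ℝ^m. Define k(x) = √(1 − ‖x‖²) for ‖x‖ ≤ 1. Then for every b ∈ ℝ^n with ‖b‖ = 1 and b ∉ 𝒩, the value μ̄(b) = sup{⟪z, b⟫ : ‖z‖ ≤ 1 and ⟪n_k, z⟫ + ψ_k ≤ 0 for k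 = 1,…,m} equals sup{ t^T t_b + k(t)·k(t_b) : t ∈ ℝ^m, ‖t‖ ≤ 1, and (A t)_k + ψ_k ≤ 0 for k = 1,…,m }. -/
open RealInnerProductSpace

section aux

variable {E : Type*} [NormedAddCommGroup E] [InnerProductSpace ℝ E]

lemma aux_inner_span_zero {ι : Type*} {v : ι → E} {w : E}
    (h : ∀ i, ⟪v i, w⟫ = 0) {u : E} (hu : u ∈ Submodule.span ℝ (Set.range v)) :
    ⟪u, w⟫ = 0 := by
  induction hu using Submodule.span_induction with
  | mem x hx => obtain ⟨i, rfl⟩ := hx; exact h i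
  | zero => simp
  | add x y _ _ hx hy => rw [inner_add_left, hx, hy, add_zero]
  | smul c x _ hx => rw [real_inner_smul_left, hx, mul_zero]

end aux

set_option maxHeartbeats 1000000 in
/-- Reduction of the core problem to dimension `m`: with `v_1,…,v_m` an
orthonormal basis of `𝒩`, `A_{kj} = ⟪n_k, v_j⟫`, `t_b = (⟪v_j, b⟫)_j`, and
`k(x) = √(1 - ‖x‖²)`, for every unit-norm `b ∉ 𝒩`,
`μ̄(b) = sup { tᵀ t_b + k(t) k(t_b) : ‖t‖ ≤ 1, (A t)_k + ψ_k ≤ 0 }`. -/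
theorem stmt_17 (n m : ℕ) (nv : Fin m → EuclideanSpace ℝ (Fin n))
    (hnv : ∀ k, ‖nv k‖ = 1) (ψ : Fin m → ℝ)
    (v : Fin m → EuclideanSpace ℝ (Fin n))
    (hv : Orthonormal ℝ v)
    (hspan : Submodule.span ℝ (Set.range v) = Submodule.span ℝ (Set.range nv))
    (A : Matrix (Fin m) (Fin m) ℝ) (hA : ∀ k j, A k j = ⟪nv k, v j⟫)
    (b : EuclideanSpace ℝ (Fin n)) (hb : ‖b‖ = 1)
    (hbN : b ∉ Submodule.span ℝ (Set.range nv))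
    (tb : EuclideanSpace ℝ (Fin m)) (htb : ∀ j, tb j = ⟪v j, b⟫) :
    sSup ((fun z => ⟪z, b⟫) ''
        {z : EuclideanSpace ℝ (Fin n) | ‖z‖ ≤ 1 ∧ ∀ k, ⟪nv k, z⟫ + ψ k ≤ 0}) =
      sSup {s : ℝ | ∃ t : EuclideanSpace ℝ (Fin m), ‖t‖ ≤ 1 ∧
        (∀ k, (∑ j, A k j * t j) + ψ k ≤ 0) ∧
        s = ⟪t, tb⟫ + Real.sqrt (1 - ‖t‖ ^ 2) * Real.sqrt (1 - ‖tb‖ ^ 2)} := by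
  classical
  set K : Submodule ℝ (EuclideanSpace ℝ (Fin n)) := Submodule.span ℝ (Set.range v) with hK
  have hbK : b ∉ K := by rw [hspan]; exact hbN
  have hnvK : ∀ k, nv k ∈ K := fun k => by
    rw [hspan]; exact Submodule.subset_span (Set.mem_range_self k)
  have hvK : ∀ j, v j ∈ K := fun j => Submodule.subset_span (Set.mem_range_self j)
  have hEucl : ∀ x y : EuclideanSpace ℝ (Fin m), ⟪x, y⟫ = ∑ j, x j * y j := by
    intro x y
    simp [PiLp.inner_apply, RCLike.inner_apply, conj_trivial]
    exact Finset.sum_congr rfl fun j _ => mul_comm _ _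
  have hsum : ∀ t : EuclideanSpace ℝ (Fin m), ‖∑ j, t j • v j‖ ^ 2 = ‖t‖ ^ 2 := by
    intro t
    rw [← real_inner_self_eq_norm_sq, ← real_inner_self_eq_norm_sq, hEucl, sum_inner]
    refine Finset.sum_congr rfl fun j _ => ?_
    rw [real_inner_smul_left, hv.inner_right_fintype]
  set P : EuclideanSpace ℝ (Fin n) → EuclideanSpace ℝ (Fin n) :=
    fun z => ∑ j, ⟪v j, z⟫ • v j with hP
  set c : EuclideanSpace ℝ (Fin n) → EuclideanSpace ℝ (Fin m) :=
    fun z => WithLp.toLp 2 (fun j => ⟪v j, z⟫) with hc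
  have hPc : ∀ z, P z = ∑ j, c z j • v j := fun z => rfl
  have hPK : ∀ z, P z ∈ K := fun z =>
    Submodule.sum_mem _ fun j _ => Submodule.smul_mem _ _ (hvK j)
  have hres : ∀ z, ∀ u ∈ K, ⟪u, z - P z⟫ = 0 := by
    intro z u hu
    refine aux_inner_span_zero (fun i => ?_) hu
    rw [inner_sub_right, hP]
    simp only
    rw [hv.inner_right_fintype, sub_self]
  have hPyth : ∀ z, ‖z‖ ^ 2 = ‖c z‖ ^ 2 + ‖z - P z‖ ^ 2 := by
    intro z
    have h1 : P z + (z - P z) = z := by abel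
    calc ‖z‖ ^ 2 = ‖P z + (z - P z)‖ ^ 2 := by rw [h1]
      _ = ‖P z‖ ^ 2 + 2 * ⟪P z, z - P z⟫ + ‖z - P z‖ ^ 2 := norm_add_sq_real _ _
      _ = ‖c z‖ ^ 2 + ‖z - P z‖ ^ 2 := by
          rw [hres z _ (hPK z), hPc, hsum]; ring
  have hnk : ∀ z k, ⟪nv k, z⟫ = ∑ j, A k j * c z j := by
    intro z k
    have h1 : ⟪nv k, z⟫ = ⟪nv k, P z⟫ + ⟪nv k, z - P z⟫ := by
      rw [← inner_add_right]
      congr 1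
      abel
    rw [h1, hres z _ (hnvK k), add_zero, hPc, inner_sum]
    refine Finset.sum_congr rfl fun j _ => ?_
    rw [real_inner_smul_right, hA, mul_comm]
  have hcb : c b = tb := by ext j; simp only [hc]; rw [htb]
  have hinner : ∀ z, ⟪z, b⟫ = ⟪c z, tb⟫ + ⟪z - P z, b - P b⟫ := by
    intro z
    have h1 : ⟪z, b⟫ = ⟪P z, b⟫ + ⟪z - P z, b⟫ := by
      rw [← inner_add_left]
      congr 1
      abel
    have h2 : ⟪P z, b⟫ = ⟪c z, tb⟫ := by
      rw [hPc, sum_inner, hEucl]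
      refine Finset.sum_congr rfl fun j _ => ?_
      rw [real_inner_smul_left, htb]
    have h3 : ⟪z - P z, b⟫ = ⟪z - P z, b - P b⟫ := by
      have h4 : ⟪z - P z, P b⟫ = 0 := by
        rw [real_inner_comm]; exact hres z _ (hPK b)
      have h5 : b = P b + (b - P b) := by abel
      calc ⟪z - P z, b⟫ = ⟪z - P z, P b + (b - P b)⟫ := by rw [← h5]
        _ = ⟪z - P z, P b⟫ + ⟪z - P z, b - P b⟫ := inner_add_right _ _ _
        _ = ⟪z - P z, b - P b⟫ := by rw [h4, zero_add]
    rw [h1, h2, h3]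
  -- facts about b's decomposition
  set wb : EuclideanSpace ℝ (Fin n) := b - P b with hwb
  have hwb2 : ‖wb‖ ^ 2 = 1 - ‖tb‖ ^ 2 := by
    have := hPyth b
    rw [hb, hcb] at this
    rw [hwb]
    nlinarith [this]
  have hwbne : wb ≠ 0 := by
    intro h0
    apply hbK
    have : b = P b := by
      have := sub_eq_zero.mp h0
      exact this
    rw [this]; exact hPK b
  have hwbpos : (0:ℝ) < ‖wb‖ := norm_pos_iff.mpr hwbne
  have htbnorm : Real.sqrt (1 - ‖tb‖ ^ 2) = ‖wb‖ := by
    rw [← hwb2, Real.sqrt_sq (norm_nonneg _)]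
  -- Set names
  set S : Set ℝ := (fun z => ⟪z, b⟫) ''
      {z : EuclideanSpace ℝ (Fin n) | ‖z‖ ≤ 1 ∧ ∀ k, ⟪nv k, z⟫ + ψ k ≤ 0} with hS
  set T : Set ℝ := {s : ℝ | ∃ t : EuclideanSpace ℝ (Fin m), ‖t‖ ≤ 1 ∧
      (∀ k, (∑ j, A k j * t j) + ψ k ≤ 0) ∧
      s = ⟪t, tb⟫ + Real.sqrt (1 - ‖t‖ ^ 2) * Real.sqrt (1 - ‖tb‖ ^ 2)} with hT
  -- T ⊆ S
  have hTS : T ⊆ S := by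
    rintro s ⟨t, ht1, ht2, rfl⟩
    set r : ℝ := Real.sqrt (1 - ‖t‖ ^ 2) / ‖wb‖ with hr
    have hrnn : 0 ≤ r := div_nonneg (Real.sqrt_nonneg _) (norm_nonneg _)
    set p : EuclideanSpace ℝ (Fin n) := ∑ j, t j • v j with hp
    have hpK : p ∈ K := Submodule.sum_mem _ fun j _ => Submodule.smul_mem _ _ (hvK j)
    set z : EuclideanSpace ℝ (Fin n) := p + r • wb with hz
    have hsq : Real.sqrt (1 - ‖t‖ ^ 2) ^ 2 = 1 - ‖t‖ ^ 2 :=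
      Real.sq_sqrt (by nlinarith [norm_nonneg t])
    have hpwb : ⟪p, wb⟫ = 0 := hres b _ hpK
    have hrw : r ^ 2 * ‖wb‖ ^ 2 = 1 - ‖t‖ ^ 2 := by
      rw [hr, div_pow, hsq]
      field_simp
    have hznorm : ‖z‖ ^ 2 = 1 := by
      rw [hz, norm_add_sq_real, real_inner_smul_right, hpwb, norm_smul, hp, hsum]
      rw [Real.norm_eq_abs, abs_of_nonneg hrnn, mul_pow, hrw]
      ring
    have hz1 : ‖z‖ ≤ 1 := by
      have heq : ‖z‖ = 1 := by
        calc ‖z‖ = Real.sqrt (‖z‖ ^ 2) := (Real.sqrt_sq (norm_nonneg _)).symm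
          _ = 1 := by rw [hznorm, Real.sqrt_one]
      rw [heq]
    refine ⟨z, ⟨hz1, fun k => ?_⟩, ?_⟩
    · have h1 : ⟪nv k, z⟫ = ∑ j, A k j * t j := by
        rw [hz, inner_add_right, real_inner_smul_right,
          hres b _ (hnvK k), mul_zero, add_zero, hp, inner_sum]
        refine Finset.sum_congr rfl fun j _ => ?_
        rw [real_inner_smul_right, hA, mul_comm]
      rw [h1]; exact ht2 k
    · have h2 : ⟪p, b⟫ = ⟪t, tb⟫ := by
        rw [hp, sum_inner, hEucl]
        refine Finset.sum_congr rfl fun j _ => ?_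
        rw [real_inner_smul_left, htb]
      have h3 : ⟪wb, b⟫ = ‖wb‖ ^ 2 := by
        have h5 : b = P b + wb := by rw [hwb]; abel
        have h4 : ⟪wb, P b⟫ = 0 := by
          rw [real_inner_comm]; exact hres b _ (hPK b)
        calc ⟪wb, b⟫ = ⟪wb, P b + wb⟫ := by rw [← h5]
          _ = ⟪wb, P b⟫ + ⟪wb, wb⟫ := inner_add_right _ _ _
          _ = ‖wb‖ ^ 2 := by rw [h4, zero_add, real_inner_self_eq_norm_sq]
      show ⟪p + r • wb, b⟫ = ⟪t, tb⟫ + Real.sqrt (1 - ‖t‖ ^ 2) * Real.sqrt (1 - ‖tb‖ ^ 2)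
      rw [inner_add_left, real_inner_smul_left, h2, h3, hr, htbnorm]
      field_simp
  -- every element of S is dominated by an element of T
  have hST : ∀ x ∈ S, ∃ s ∈ T, x ≤ s := by
    rintro x ⟨z, ⟨hz1, hz2⟩, rfl⟩
    refine ⟨⟪c z, tb⟫ + Real.sqrt (1 - ‖c z‖ ^ 2) * Real.sqrt (1 - ‖tb‖ ^ 2),
      ⟨c z, ?_, fun k => by rw [← hnk z k]; exact hz2 k, rfl⟩, ?_⟩
    · have := hPyth z
      nlinarith [norm_nonneg (c z), norm_nonneg (z - P z), norm_nonneg z, hz1]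
    · show ⟪z, b⟫ ≤ _
      rw [hinner z]
      have h1 : ⟪z - P z, b - P b⟫ ≤ ‖z - P z‖ * ‖wb‖ := by
        rw [hwb]; exact real_inner_le_norm _ _
      have h2 : ‖z - P z‖ ≤ Real.sqrt (1 - ‖c z‖ ^ 2) := by
        have h3 : ‖z - P z‖ ^ 2 ≤ 1 - ‖c z‖ ^ 2 := by
          have := hPyth z
          nlinarith [norm_nonneg z, hz1]
        calc ‖z - P z‖ = Real.sqrt (‖z - P z‖ ^ 2) :=
              (Real.sqrt_sq (norm_nonneg _)).symm
          _ ≤ Real.sqrt (1 - ‖c z‖ ^ 2) := Real.sqrt_le_sqrt h3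
      have h4 : ‖z - P z‖ * ‖wb‖ ≤ Real.sqrt (1 - ‖c z‖ ^ 2) * Real.sqrt (1 - ‖tb‖ ^ 2) := by
        rw [htbnorm]
        exact mul_le_mul_of_nonneg_right h2 (norm_nonneg _)
      linarith
  -- boundedness
  have hSbdd : BddAbove S := by
    refine ⟨1, ?_⟩
    rintro x ⟨z, ⟨hz1, _⟩, rfl⟩
    calc ⟪z, b⟫ ≤ ‖z‖ * ‖b‖ := real_inner_le_norm _ _
      _ ≤ 1 := by rw [hb, mul_one]; exact hz1
  have hTbdd : BddAbove T := hSbdd.mono hTS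
  -- conclude
  rcases Set.eq_empty_or_nonempty S with hSe | hSne
  · have hTe : T = ∅ := Set.eq_empty_of_subset_empty (hSe ▸ hTS)
    rw [hSe, hTe]
  · obtain ⟨x, hx⟩ := hSne
    obtain ⟨s, hsT, _⟩ := hST x hx
    apply le_antisymm
    · refine csSup_le ⟨x, hx⟩ fun y hy => ?_
      obtain ⟨s', hs'T, hys'⟩ := hST y hy
      exact hys'.trans (le_csSup hTbdd hs'T)
    · exact csSup_le_csSup hSbdd ⟨s, hsT⟩ hTS
end

section
/- Let v_1,…,v_m be an orthonormal basis of the subspace 𝒩 = span{n_1,…,n_m} (assume dim 𝒩 = m), let A be the m×m matrix with entries A_{kj} = ⟪n_k, v_j⟫, and for b ∈ ℝ^n with ‖b‖ = 1 let t_b = (⟪v_1, b⟫,…,⟪v_m, b⟫) ∈ ℝ^m and t_b^e = (t_b, √(1 − ‖t_b‖²)) ∈ ℝ^{m+1}. Then for every b ∈ ℝ^n with ‖b‖ = 1 and b ∉ 𝒩, the value μ̄(b) = sup{⟪z, b⟫ : z ∈ ℝ^n, ‖z‖ ≤ 1 and ⟪n_k, z⟫ + ψ_k ≤ 0 for k =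 1,…,m} equals sup{ ⟪t^e, t_b^e⟫ : t^e ∈ ℝ^{m+1}, ‖t^e‖ ≤ 1, and ([A 0] t^e)_k + ψ_k ≤ 0 for k = 1,…,m }, where [A 0] is the m×(m+1) matrix obtained by appending a zero column to A. -/
open RealInnerProductSpace

private theorem euc_norm_sq' (n : ℕ) (x : EuclideanSpace ℝ (Fin n)) :
    ‖x‖^2 = ∑ i, (x i)^2 := by
  rw [EuclideanSpace.norm_eq, Real.sq_sqrt (by positivity)]
  simp [sq_abs]

private theorem euc_inner' (n : ℕ) (x y : EuclideanSpace ℝ (Fin n)) :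
    ⟪x, y⟫ = ∑ i, x i * y i := by
  simp [PiLp.inner_apply, RCLike.inner_apply]
  exact Finset.sum_congr rfl fun i _ => mul_comm _ _

set_option maxHeartbeats 1000000 in
/-- Reduction of the core problem to dimension `m + 1`: with `v_1,…,v_m` an
orthonormal basis of `𝒩`, `A_{kj} = ⟪n_k, v_j⟫`, `t_b = (⟪v_j, b⟫)_j` and
`t_b^e = (t_b, √(1 - ‖t_b‖²))`, for every unit-norm `b ∉ 𝒩`,
`μ̄(b) = sup { ⟪t^e, t_b^e⟫ : t^e ∈ ℝ^{m+1}, ‖t^e‖ ≤ 1, ([A 0] t^e)_k + ψ_k ≤ 0 }`. -/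
theorem stmt_18 (n m : ℕ) (nv : Fin m → EuclideanSpace ℝ (Fin n))
    (hnv : ∀ k, ‖nv k‖ = 1) (ψ : Fin m → ℝ)
    (v : Fin m → EuclideanSpace ℝ (Fin n))
    (hv : Orthonormal ℝ v)
    (hspan : Submodule.span ℝ (Set.range v) = Submodule.span ℝ (Set.range nv))
    (A : Matrix (Fin m) (Fin m) ℝ) (hA : ∀ k j, A k j = ⟪nv k, v j⟫)
    (b : EuclideanSpace ℝ (Fin n)) (hb : ‖b‖ = 1)
    (hbN : b ∉ Submodule.span ℝ (Set.range nv))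
    (tb : EuclideanSpace ℝ (Fin m)) (htb : ∀ j, tb j = ⟪v j, b⟫)
    (tbe : EuclideanSpace ℝ (Fin (m + 1)))
    (htbe : ∀ j : Fin m, tbe j.castSucc = tb j)
    (htbe' : tbe (Fin.last m) = Real.sqrt (1 - ‖tb‖ ^ 2)) :
    sSup ((fun z => ⟪z, b⟫) ''
        {z : EuclideanSpace ℝ (Fin n) | ‖z‖ ≤ 1 ∧ ∀ k, ⟪nv k, z⟫ + ψ k ≤ 0}) =
      sSup {s : ℝ | ∃ te : EuclideanSpace ℝ (Fin (m + 1)), ‖te‖ ≤ 1 ∧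
        (∀ k, (∑ j : Fin m, A k j * te j.castSucc) + ψ k ≤ 0) ∧
        s = ⟪te, tbe⟫} := by
  classical
  set p : EuclideanSpace ℝ (Fin n) := ∑ j, tb j • v j with hp
  set w : EuclideanSpace ℝ (Fin n) := b - p with hwdef
  have hbpw : b = p + w := by rw [hwdef]; abel
  -- residual of any vector is orthogonal to each v j
  have hres : ∀ x : EuclideanSpace ℝ (Fin n), ∀ j,
      ⟪v j, x - ∑ i, ⟪v i, x⟫ • v i⟫ = 0 := by
    intro x j
    rw [inner_sub_right, hv.inner_right_fintype]
    ring
  have hvw : ∀ j, ⟪v j, w⟫ = 0 := by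
    intro j
    have : p = ∑ i, ⟪v i, b⟫ • v i := by
      rw [hp]; exact Finset.sum_congr rfl fun i _ => by rw [htb]
    rw [hwdef, this]
    exact hres b j
  -- vectors orthogonal to each v j lie in 𝒩ᗮ
  have horth : ∀ x : EuclideanSpace ℝ (Fin n), (∀ j, ⟪v j, x⟫ = 0) →
      x ∈ (Submodule.span ℝ (Set.range nv))ᗮ := by
    intro x hx
    rw [← hspan, Submodule.mem_orthogonal]
    intro u hu
    induction hu using Submodule.span_induction with
    | mem y hy => obtain ⟨j, rfl⟩ := hy; exact hx j
    | zero => simp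
    | add y z _ _ hy hz => rw [inner_add_left, hy, hz, add_zero]
    | smul c y _ hy => rw [real_inner_smul_left, hy, mul_zero]
  have hworth := horth w hvw
  have hnw : ∀ k, ⟪nv k, w⟫ = 0 := fun k =>
    Submodule.inner_right_of_mem_orthogonal (Submodule.subset_span (Set.mem_range_self k)) hworth
  have hpw : ⟪p, w⟫ = 0 := by
    rw [hp, sum_inner]
    refine Finset.sum_eq_zero fun j _ => ?_
    rw [real_inner_smul_left, hvw, mul_zero]
  have hwp : ⟪w, p⟫ = 0 := by rw [real_inner_comm]; exact hpw
  have hpnorm : ‖p‖^2 = ‖tb‖^2 := by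
    rw [← real_inner_self_eq_norm_sq, hp, sum_inner, euc_norm_sq']
    refine Finset.sum_congr rfl fun j _ => ?_
    rw [real_inner_smul_left, hv.inner_right_fintype, sq]
  have hwnorm : ‖w‖^2 = 1 - ‖tb‖^2 := by
    have h1 : ‖b‖^2 = ‖p‖^2 + 2 * ⟪p, w⟫ + ‖w‖^2 := by
      rw [hbpw]; exact norm_add_sq_real p w
    rw [hb, hpw, hpnorm] at h1
    linarith
  have hwne : w ≠ 0 := by
    intro h0
    apply hbN
    have : b = p := by rw [hbpw, h0, add_zero]
    rw [this, ← hspan, hp]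
    exact Submodule.sum_mem _ fun j _ =>
      Submodule.smul_mem _ _ (Submodule.subset_span ⟨j, rfl⟩)
  have hwpos : 0 < ‖w‖ := norm_pos_iff.mpr hwne
  have hsq : Real.sqrt (1 - ‖tb‖^2) = ‖w‖ := by
    rw [← hwnorm, Real.sqrt_sq hwpos.le]
  have hwb : ⟪w, b⟫ = ‖w‖^2 := by
    rw [hbpw, inner_add_right, hwp, zero_add, real_inner_self_eq_norm_sq]
  congr 1
  ext s
  simp only [Set.mem_image, Set.mem_setOf_eq]
  constructor
  · rintro ⟨z, ⟨hz1, hz2⟩, rfl⟩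
    set q : EuclideanSpace ℝ (Fin n) := ∑ i, ⟪v i, z⟫ • v i with hq
    set r : EuclideanSpace ℝ (Fin n) := z - q with hr
    have hzqr : z = q + r := by rw [hr]; abel
    have hvr : ∀ j, ⟪v j, r⟫ = 0 := fun j => hres z j
    have hqr : ⟪q, r⟫ = 0 := by
      rw [hq, sum_inner]
      refine Finset.sum_eq_zero fun j _ => ?_
      rw [real_inner_smul_left, hvr, mul_zero]
    have hqnorm : ‖q‖^2 = ∑ j, ⟪v j, z⟫^2 := by
      rw [← real_inner_self_eq_norm_sq, hq, sum_inner]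
      refine Finset.sum_congr rfl fun j _ => ?_
      rw [real_inner_smul_left, hv.inner_right_fintype, sq]
    have hznorm : ‖z‖^2 = ‖q‖^2 + ‖r‖^2 := by
      have := norm_add_sq_real q r
      rw [← hzqr, hqr] at this
      linarith
    have hwq : ⟪w, q⟫ = 0 := by
      rw [hq, inner_sum]
      refine Finset.sum_eq_zero fun j _ => ?_
      rw [real_inner_smul_right, show ⟪w, v j⟫ = 0 from (real_inner_comm (v j) w).trans (hvw j), mul_zero]
    have hwz : ⟪w, z⟫ = ⟪w, r⟫ := by
      rw [hzqr, inner_add_right, hwq, zero_add]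
    obtain ⟨te, htec, htel⟩ : ∃ te : EuclideanSpace ℝ (Fin (m + 1)),
        (∀ j : Fin m, te j.castSucc = ⟪v j, z⟫) ∧ te (Fin.last m) = ⟪w, z⟫ / ‖w‖ := by
      refine ⟨WithLp.toLp 2 (Fin.snoc (fun j => ⟪v j, z⟫) (⟪w, z⟫ / ‖w‖) : Fin (m+1) → ℝ), ?_, ?_⟩
      · intro j; rw [WithLp.ofLp_toLp]; exact Fin.snoc_castSucc _ _ _
      · rw [WithLp.ofLp_toLp]; exact Fin.snoc_last _ _
    refine ⟨te, ?_, ?_, ?_⟩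
    · have hcs : ⟪w, r⟫ * ⟪w, r⟫ ≤ ⟪w, w⟫ * ⟪r, r⟫ := real_inner_mul_inner_self_le w r
      rw [real_inner_self_eq_norm_sq, real_inner_self_eq_norm_sq] at hcs
      have hn2 : ‖te‖^2 = ∑ j, ⟪v j, z⟫^2 + (⟪w, z⟫ / ‖w‖)^2 := by
        rw [euc_norm_sq', Fin.sum_univ_castSucc, htel]
        congr 1
        exact Finset.sum_congr rfl fun j _ => by rw [htec]
      have hle : (⟪w, z⟫ / ‖w‖)^2 ≤ ‖r‖^2 := by
        rw [hwz, div_pow, div_le_iff₀ (by positivity)]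
        nlinarith
      have hb1 : ‖te‖^2 ≤ 1 := by
        rw [hn2]
        calc ∑ j, ⟪v j, z⟫^2 + (⟪w, z⟫ / ‖w‖)^2 ≤ ‖q‖^2 + ‖r‖^2 := by
              rw [hqnorm]; linarith
          _ = ‖z‖^2 := hznorm.symm
          _ ≤ 1 := by nlinarith [norm_nonneg z]
      nlinarith [norm_nonneg te]
    · intro k
      have hnr : ⟪nv k, r⟫ = 0 :=
        Submodule.inner_right_of_mem_orthogonal (Submodule.subset_span (Set.mem_range_self k))
          (horth r hvr)
      have hnz : ⟪nv k, z⟫ = ∑ j, ⟪nv k, v j⟫ * ⟪v j, z⟫ := by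
        conv_lhs => rw [hzqr, inner_add_right]
        rw [hnr, add_zero, hq, inner_sum]
        refine Finset.sum_congr rfl fun j _ => ?_
        rw [real_inner_smul_right, mul_comm]
      calc (∑ j : Fin m, A k j * te j.castSucc) + ψ k
          = ⟪nv k, z⟫ + ψ k := by
            rw [hnz]
            congr 1
            exact Finset.sum_congr rfl fun j _ => by rw [hA k j, htec j]
        _ ≤ 0 := hz2 k
    · conv_rhs => rw [euc_inner' (m+1) te tbe]
      rw [Fin.sum_univ_castSucc, htel, htbe', hsq,
        div_mul_cancel₀ _ (ne_of_gt hwpos)]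
      conv_lhs => rw [hbpw, inner_add_right, hp, inner_sum]
      rw [show ⟪z, w⟫ = ⟪w, z⟫ from real_inner_comm w z]
      congr 1
      refine Finset.sum_congr rfl fun j _ => ?_
      rw [real_inner_smul_right, htec j, htbe j, htb j,
        show ⟪z, v j⟫ = ⟪v j, z⟫ from real_inner_comm (v j) z]
      ring
  · rintro ⟨te, hte1, hte2, rfl⟩
    set z : EuclideanSpace ℝ (Fin n) :=
      (∑ j, te j.castSucc • v j) + (te (Fin.last m) / ‖w‖) • w with hz
    have hznorm : ‖z‖^2 = ‖te‖^2 := by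
      have h1 : ⟪(∑ j : Fin m, te j.castSucc • v j : EuclideanSpace ℝ (Fin n)),
          (te (Fin.last m) / ‖w‖) • w⟫ = 0 := by
        rw [sum_inner]
        refine Finset.sum_eq_zero fun j _ => ?_
        rw [real_inner_smul_left, real_inner_smul_right, hvw, mul_zero, mul_zero]
      have h2 : ‖(∑ j : Fin m, te j.castSucc • v j : EuclideanSpace ℝ (Fin n))‖^2
          = ∑ j : Fin m, (te j.castSucc)^2 := by
        rw [← real_inner_self_eq_norm_sq, sum_inner]
        refine Finset.sum_congr rfl fun j _ => ?_
        rw [real_inner_smul_left, hv.inner_right_fintype, sq]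
      have h3 : ‖(te (Fin.last m) / ‖w‖) • w‖^2 = (te (Fin.last m))^2 := by
        rw [norm_smul, mul_pow, Real.norm_eq_abs, sq_abs, div_pow, hwnorm]
        field_simp
        rw [← hwnorm]
        field_simp
      have h4 := norm_add_sq_real (∑ j, te j.castSucc • v j :
        EuclideanSpace ℝ (Fin n)) ((te (Fin.last m) / ‖w‖) • w)
      rw [← hz, h1, h2, h3] at h4
      rw [h4, euc_norm_sq', Fin.sum_univ_castSucc]
      ring
    refine ⟨z, ⟨?_, ?_⟩, ?_⟩
    · nlinarith [norm_nonneg z, norm_nonneg te]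
    · intro k
      have : ⟪nv k, z⟫ = ∑ j, A k j * te j.castSucc := by
        rw [hz, inner_add_right, real_inner_smul_right, hnw, mul_zero, add_zero,
          inner_sum]
        refine Finset.sum_congr rfl fun j _ => ?_
        rw [real_inner_smul_right, hA, mul_comm]
      rw [this]
      exact hte2 k
    · rw [inner_add_left, sum_inner, real_inner_smul_left, hwb]
      conv_rhs => rw [euc_inner' (m+1) te tbe]
      rw [Fin.sum_univ_castSucc, htbe']
      congr 1
      · refine Finset.sum_congr rfl fun j _ => ?_
        rw [real_inner_smul_left, htbe j, htb j]
      · rw [hsq, sq]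
        field_simp
end
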